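/- The function β^r(x,t) = (a/2)[e^{β̂(ω)x} sin(ωt + β̄(ω)x) + e^{−β̂(ω)x} sin(ωt − β̄(ω)x)], with β̄(ω) = ω√((√(1+ω²d²)+1)/(2(1+ω²d²))) and β̂(ω) = ω√((√(1+ω²d²)−1)/(2(1+ω²d²))), satisfies the wave equation with Kelvin–Voigt damping ∂_{tt}β = ∂_{xx}β + d∂_{xxt}β, with ∂_x β(0,t) = 0 and β(0,t) = a sin(ωt). -/

import Mathlib

open Real Set

/-- General mode shape used for the Kelvin–Voigt trajectory computation. -/
noncomputable def Gfun (a ω bh bb α₁ γ₁ α₂ γ₂ x t : ℝ) : ℝ :=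
  (a / 2) * (Real.exp (bh * x) *
      (α₁ * Real.sin (ω * t + bb * x) + γ₁ * Real.cos (ω * t + bb * x)) +
    Real.exp (-(bh * x)) *
      (α₂ * Real.sin (ω * t - bb * x) + γ₂ * Real.cos (ω * t - bb * x)))

lemma Gt (a ω bh bb α₁ γ₁ α₂ γ₂ x t : ℝ) :
    HasDerivAt (fun τ => Gfun a ω bh bb α₁ γ₁ α₂ γ₂ x τ)
      (Gfun a ω bh bb (-(ω * γ₁)) (ω * α₁) (-(ω * γ₂)) (ω * α₂) x t) t := by
  have h1 : HasDerivAt (fun τ : ℝ => ω * τ + bb * x) ω t := by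
    simpa using (((hasDerivAt_id t).const_mul ω).add_const (bb * x))
  have h2 : HasDerivAt (fun τ : ℝ => ω * τ - bb * x) ω t := by
    simpa using (((hasDerivAt_id t).const_mul ω).sub_const (bb * x))
  have H := ((((h1.sin.const_mul α₁).add (h1.cos.const_mul γ₁)).const_mul
      (Real.exp (bh * x))).add
      (((h2.sin.const_mul α₂).add (h2.cos.const_mul γ₂)).const_mul
      (Real.exp (-(bh * x))))).const_mul (a / 2)
  refine H.congr_deriv ?_
  simp only [Gfun]
  ring

lemma Gx (a ω bh bb α₁ γ₁ α₂ γ₂ x t : ℝ) :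
    HasDerivAt (fun ξ => Gfun a ω bh bb α₁ γ₁ α₂ γ₂ ξ t)
      (Gfun a ω bh bb (bh * α₁ - bb * γ₁) (bh * γ₁ + bb * α₁)
        (-(bh * α₂) + bb * γ₂) (-(bh * γ₂) - bb * α₂) x t) x := by
  have e1 : HasDerivAt (fun ξ : ℝ => Real.exp (bh * ξ)) (Real.exp (bh * x) * bh) x := by
    simpa using ((hasDerivAt_id x).const_mul bh).exp
  have e2 : HasDerivAt (fun ξ : ℝ => Real.exp (-(bh * ξ)))
      (Real.exp (-(bh * x)) * (-bh)) x := by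
    simpa using (((hasDerivAt_id x).const_mul bh).neg).exp
  have a1 : HasDerivAt (fun ξ : ℝ => ω * t + bb * ξ) bb x := by
    simpa using (((hasDerivAt_id x).const_mul bb).const_add (ω * t))
  have a2 : HasDerivAt (fun ξ : ℝ => ω * t - bb * ξ) (-bb) x := by
    simpa using (((hasDerivAt_id x).const_mul bb).const_sub (ω * t))
  have H := ((e1.mul ((a1.sin.const_mul α₁).add (a1.cos.const_mul γ₁))).add
      (e2.mul ((a2.sin.const_mul α₂).add (a2.cos.const_mul γ₂)))).const_mul (a / 2)
  refine H.congr_deriv ?_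
  simp only [Gfun, Pi.add_apply]
  ring

lemma Gt_deriv (a ω bh bb α₁ γ₁ α₂ γ₂ x : ℝ) :
    (fun t => deriv (fun τ => Gfun a ω bh bb α₁ γ₁ α₂ γ₂ x τ) t) =
      fun t => Gfun a ω bh bb (-(ω * γ₁)) (ω * α₁) (-(ω * γ₂)) (ω * α₂) x t :=
  funext fun t => (Gt a ω bh bb α₁ γ₁ α₂ γ₂ x t).deriv

lemma Gx_deriv (a ω bh bb α₁ γ₁ α₂ γ₂ t : ℝ) :
    (fun x => deriv (fun ξ => Gfun a ω bh bb α₁ γ₁ α₂ γ₂ ξ t) x) =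
      fun x => Gfun a ω bh bb (bh * α₁ - bb * γ₁) (bh * γ₁ + bb * α₁)
        (-(bh * α₂) + bb * γ₂) (-(bh * γ₂) - bb * α₂) x t :=
  funext fun x => (Gx a ω bh bb α₁ γ₁ α₂ γ₂ x t).deriv

lemma Glin (a ω bh bb d L₁ L₂ L₃ L₄ M₁ M₂ M₃ M₄ N₁ N₂ N₃ N₄ x t : ℝ)
    (h1 : L₁ = M₁ + d * N₁) (h2 : L₂ = M₂ + d * N₂)
    (h3 : L₃ = M₃ + d * N₃) (h4 : L₄ = M₄ + d * N₄) :
    Gfun a ω bh bb L₁ L₂ L₃ L₄ x t =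
      Gfun a ω bh bb M₁ M₂ M₃ M₄ x t + d * Gfun a ω bh bb N₁ N₂ N₃ N₄ x t := by
  simp only [Gfun]
  rw [h1, h2, h3, h4]
  ring

/-- The motion-planning signal
`βʳ(x,t) = (a/2)[e^{β̂x} sin(ωt+β̄x) + e^{-β̂x} sin(ωt-β̄x)]`, with
`β̄ = ω√((√(1+ω²d²)+1)/(2(1+ω²d²)))` and `β̂ = ω√((√(1+ω²d²)-1)/(2(1+ω²d²)))`,
satisfies the Kelvin–Voigt damped wave equation `∂_{tt}β = ∂_{xx}β + d ∂_{xxt}β`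
on `[0,D] × ℝ₊`, with `∂_x β(0,t) = 0` and `β(0,t) = a sin(ωt)`. -/
theorem kelvin_voigt_trajectory_generation
    (a ω d D : ℝ) (ha : 0 < a) (hω : 0 < ω) (hd : 0 ≤ d) (hD : 0 < D)
    (bbar bhat : ℝ)
    (hbbar : bbar = ω * Real.sqrt ((Real.sqrt (1 + ω ^ 2 * d ^ 2) + 1) /
      (2 * (1 + ω ^ 2 * d ^ 2))))
    (hbhat : bhat = ω * Real.sqrt ((Real.sqrt (1 + ω ^ 2 * d ^ 2) - 1) /
      (2 * (1 + ω ^ 2 * d ^ 2))))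
    (β : ℝ → ℝ → ℝ)
    (hβ : ∀ x t, β x t = (a / 2) *
      (Real.exp (bhat * x) * Real.sin (ω * t + bbar * x) +
       Real.exp (-(bhat * x)) * Real.sin (ω * t - bbar * x))) :
    (∀ x ∈ Set.Icc (0 : ℝ) D, ∀ t : ℝ, 0 ≤ t →
        deriv (fun τ => deriv (fun τ' => β x τ') τ) t =
          deriv (fun ξ => deriv (fun ξ' => β ξ' t) ξ) x +
          d * deriv (fun τ => deriv (fun ξ => deriv (fun ξ' => β ξ' τ) ξ) x) t) ∧
    (∀ t : ℝ, 0 ≤ t → deriv (fun ξ => β ξ t) 0 = 0) ∧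
    (∀ t : ℝ, 0 ≤ t → β 0 t = a * Real.sin (ω * t)) := by
  -- basic facts about the square root
  have hs2pos : (0 : ℝ) < 1 + ω ^ 2 * d ^ 2 := by positivity
  set s : ℝ := Real.sqrt (1 + ω ^ 2 * d ^ 2) with hsdef
  have hssq : s ^ 2 = 1 + ω ^ 2 * d ^ 2 := Real.sq_sqrt hs2pos.le
  have hsnn : 0 ≤ s := Real.sqrt_nonneg _
  have hs1 : 1 ≤ s := by nlinarith [hssq, hsnn, sq_nonneg (ω * d)]
  -- squares of the coefficients
  have hbb2 : bbar ^ 2 = ω ^ 2 * ((s + 1) / (2 * (1 + ω ^ 2 * d ^ 2))) := by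
    rw [hbbar, mul_pow, Real.sq_sqrt (by positivity)]
  have hbh2 : bhat ^ 2 = ω ^ 2 * ((s - 1) / (2 * (1 + ω ^ 2 * d ^ 2))) := by
    rw [hbhat, mul_pow, Real.sq_sqrt ?_]
    have : (0:ℝ) ≤ s - 1 := by linarith
    positivity
  have hA' : (bbar ^ 2 - bhat ^ 2) * (1 + ω ^ 2 * d ^ 2) = ω ^ 2 := by
    rw [hbb2, hbh2]
    field_simp
    ring
  -- product of the coefficients
  have hsqrtmul : Real.sqrt ((s - 1) / (2 * (1 + ω ^ 2 * d ^ 2))) *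
      Real.sqrt ((s + 1) / (2 * (1 + ω ^ 2 * d ^ 2))) =
      ω * d / (2 * (1 + ω ^ 2 * d ^ 2)) := by
    rw [← Real.sqrt_mul (by
      have : (0:ℝ) ≤ s - 1 := by linarith
      positivity)]
    have key : (s - 1) / (2 * (1 + ω ^ 2 * d ^ 2)) * ((s + 1) / (2 * (1 + ω ^ 2 * d ^ 2)))
        = (ω * d / (2 * (1 + ω ^ 2 * d ^ 2))) ^ 2 := by
      field_simp
      nlinarith [hssq]
    rw [key, Real.sqrt_sq (by positivity)]
  have hB' : (2 * bhat * bbar) * (1 + ω ^ 2 * d ^ 2) = ω ^ 3 * d := by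
    rw [hbhat, hbbar]
    have : ω * Real.sqrt ((s - 1) / (2 * (1 + ω ^ 2 * d ^ 2))) *
        (ω * Real.sqrt ((s + 1) / (2 * (1 + ω ^ 2 * d ^ 2)))) =
        ω ^ 2 * (ω * d / (2 * (1 + ω ^ 2 * d ^ 2))) := by
      rw [← hsqrtmul]; ring
    calc 2 * (ω * Real.sqrt ((s - 1) / (2 * (1 + ω ^ 2 * d ^ 2)))) *
          (ω * Real.sqrt ((s + 1) / (2 * (1 + ω ^ 2 * d ^ 2)))) * (1 + ω ^ 2 * d ^ 2)
        = 2 * (ω ^ 2 * (ω * d / (2 * (1 + ω ^ 2 * d ^ 2)))) * (1 + ω ^ 2 * d ^ 2) := by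
          rw [← this]; ring
      _ = ω ^ 3 * d := by field_simp
  -- the two key scalar identities
  have hP : bhat ^ 2 - bbar ^ 2 - d * ω * (2 * bhat * bbar) = -ω ^ 2 := by
    have h1 : (bhat ^ 2 - bbar ^ 2 - d * ω * (2 * bhat * bbar) + ω ^ 2) *
        (1 + ω ^ 2 * d ^ 2) = 0 := by
      linear_combination (-1 : ℝ) * hA' - d * ω * hB'
    rcases mul_eq_zero.1 h1 with h | h
    · linarith
    · linarith
  have hQ : 2 * bhat * bbar + d * ω * (bhat ^ 2 - bbar ^ 2) = 0 := by
    have h1 : (2 * bhat * bbar + d * ω * (bhat ^ 2 - bbar ^ 2)) *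
        (1 + ω ^ 2 * d ^ 2) = 0 := by
      linear_combination hB' - d * ω * hA'
    rcases mul_eq_zero.1 h1 with h | h
    · linarith
    · linarith
  -- β as a Gfun
  have hβG : ∀ x, (fun t => β x t) = fun t => Gfun a ω bhat bbar 1 0 1 0 x t := by
    intro x
    funext t
    rw [hβ]
    simp only [Gfun]
    ring
  have hβG' : ∀ t, (fun x => β x t) = fun x => Gfun a ω bhat bbar 1 0 1 0 x t := by
    intro t
    funext x
    rw [hβ]
    simp only [Gfun]
    ring
  refine ⟨?_, ?_, ?_⟩
  · intro x _ t _
    have e1 : (fun τ => deriv (fun τ' => β x τ') τ) =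
        fun τ => Gfun a ω bhat bbar (-(ω * 0)) (ω * 1) (-(ω * 0)) (ω * 1) x τ := by
      rw [hβG x]
      exact Gt_deriv a ω bhat bbar 1 0 1 0 x
    have e2 : ∀ τ, (fun ξ' => β ξ' τ) = fun ξ' => Gfun a ω bhat bbar 1 0 1 0 ξ' τ :=
      fun τ => hβG' τ
    have e3 : ∀ τ, (fun ξ => deriv (fun ξ' => β ξ' τ) ξ) =
        fun ξ => Gfun a ω bhat bbar (bhat * 1 - bbar * 0) (bhat * 0 + bbar * 1)
          (-(bhat * 1) + bbar * 0) (-(bhat * 0) - bbar * 1) ξ τ := by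
      intro τ
      rw [e2 τ]
      exact Gx_deriv a ω bhat bbar 1 0 1 0 τ
    rw [e1]
    rw [show (fun ξ => deriv (fun ξ' => β ξ' t) ξ) = _ from e3 t]
    have e4 : (fun τ => deriv (fun ξ => deriv (fun ξ' => β ξ' τ) ξ) x) =
        fun τ => deriv (fun ξ => Gfun a ω bhat bbar (bhat * 1 - bbar * 0)
          (bhat * 0 + bbar * 1) (-(bhat * 1) + bbar * 0) (-(bhat * 0) - bbar * 1) ξ τ) x := by
      funext τ
      rw [e3 τ]
    rw [e4]
    -- now compute all outer derivatives
    rw [(Gt a ω bhat bbar (-(ω * 0)) (ω * 1) (-(ω * 0)) (ω * 1) x t).deriv]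
    have e5 : (fun τ => deriv (fun ξ => Gfun a ω bhat bbar (bhat * 1 - bbar * 0)
        (bhat * 0 + bbar * 1) (-(bhat * 1) + bbar * 0) (-(bhat * 0) - bbar * 1) ξ τ) x) =
        fun τ => Gfun a ω bhat bbar
          (bhat * (bhat * 1 - bbar * 0) - bbar * (bhat * 0 + bbar * 1))
          (bhat * (bhat * 0 + bbar * 1) + bbar * (bhat * 1 - bbar * 0))
          (-(bhat * (-(bhat * 1) + bbar * 0)) + bbar * (-(bhat * 0) - bbar * 1))
          (-(bhat * (-(bhat * 0) - bbar * 1)) - bbar * (-(bhat * 1) + bbar * 0)) x τ := by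
      funext τ
      exact (Gx a ω bhat bbar _ _ _ _ x τ).deriv
    rw [(Gx a ω bhat bbar _ _ _ _ x t).deriv, e5,
      (Gt a ω bhat bbar _ _ _ _ x t).deriv]
    apply Glin
    · linear_combination -hP
    · linear_combination -hQ
    · linear_combination -hP
    · linear_combination -hQ
  · intro t _
    rw [show (fun ξ => β ξ t) = _ from hβG' t, (Gx a ω bhat bbar 1 0 1 0 0 t).deriv]
    simp only [Gfun, mul_zero, neg_zero, add_zero, sub_zero, Real.exp_zero]
    ring
  · intro t _
    rw [hβ]
    simp
    ring
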